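/- Every piecewise syndetic subset of ℕ is weakly dispersing: if A ⊆ ℕ is such that A + F is thick for some finite F ⊆ ℕ₀, then for every irrational α ∈ ℝ the closure of { nα mod 1 : n ∈ A } in ℝ/ℤ contains a nonempty open set. -/

import Mathlib

open Set
open AddSubgroup in

/-- Small nonzero natural multiple of an irrational on the circle. -/
lemma L1 (α : ℝ) (hα : Irrational α) {ε : ℝ} (hε : 0 < ε) :
    ∃ m : ℕ, 0 < m ∧ ‖(((m : ℝ) * α : ℝ) : AddCircle (1 : ℝ))‖ < ε := by
  set S : AddSubgroup ℝ := zmultiples α ⊔ zmultiples (1 : ℝ) with hS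
  have hdense : Dense (S : Set ℝ) := by
    rcases S.dense_or_cyclic with h | ⟨a, ha⟩
    · exact h
    · exfalso
      have h1 : (1 : ℝ) ∈ S := AddSubgroup.mem_sup_right (mem_zmultiples 1)
      have hαS : α ∈ S := AddSubgroup.mem_sup_left (mem_zmultiples α)
      rw [ha, mem_closure_singleton] at h1 hαS
      obtain ⟨n, hn⟩ := h1
      obtain ⟨m, hm⟩ := hαS
      have hn0 : (n : ℝ) ≠ 0 := by
        intro h
        rw [zsmul_eq_mul, h, zero_mul] at hn; exact one_ne_zero hn.symm
      refine hα ⟨(m : ℚ) / (n : ℚ), ?_⟩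
      have : (n : ℝ) * a = 1 := by rw [← hn, zsmul_eq_mul]
      have ha' : a = 1 / n := by field_simp at this ⊢; linarith [this]
      rw [← hm, zsmul_eq_mul, ha']
      push_cast
      field_simp
  have hne : Set.Nonempty (Ioo (0 : ℝ) (min ε 1)) :=
    ⟨min ε 1 / 2, by constructor <;> [positivity; nlinarith [lt_min hε one_pos]]⟩
  obtain ⟨s, hsS, hs⟩ := hdense.exists_mem_open isOpen_Ioo hne
  rw [SetLike.mem_coe, hS, AddSubgroup.mem_sup] at hsS
  obtain ⟨y, hy, z, hz, hyz⟩ := hsS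
  obtain ⟨m, rfl⟩ := mem_zmultiples_iff.mp hy
  obtain ⟨n, rfl⟩ := mem_zmultiples_iff.mp hz
  have hm0 : m ≠ 0 := by
    rintro rfl
    rw [zero_zsmul, zero_add, zsmul_eq_mul, mul_one] at hyz
    have h1 : (0:ℝ) < n := hyz ▸ hs.1
    have h2 : (n:ℝ) < 1 := lt_of_lt_of_le (hyz ▸ hs.2) (min_le_right _ _)
    have : (0:ℤ) < n := by exact_mod_cast h1
    have : (1:ℤ) ≤ n := this
    have : (1:ℝ) ≤ n := by exact_mod_cast this
    linarith
  refine ⟨m.natAbs, Int.natAbs_pos.mpr hm0, ?_⟩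
  have key : ‖(((m : ℝ) * α : ℝ) : AddCircle (1 : ℝ))‖ < ε := by
    have hcoe : (((m : ℝ) * α : ℝ) : AddCircle (1 : ℝ)) = ((s : ℝ) : AddCircle (1:ℝ)) := by
      rw [← hyz]
      have : ((m:ℝ) * α : ℝ) = (m • α + n • (1:ℝ)) - (n : ℝ) := by
        rw [zsmul_eq_mul, zsmul_eq_mul, mul_one]; ring
      rw [this]
      have : (((n:ℝ) : ℝ) : AddCircle (1:ℝ)) = 0 := by
        rw [AddCircle.coe_eq_zero_iff]
        exact ⟨n, by rw [zsmul_eq_mul, mul_one]⟩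
      calc ((m • α + n • (1:ℝ) - (n:ℝ) : ℝ) : AddCircle (1:ℝ))
          = ((m • α + n • (1:ℝ) : ℝ) : AddCircle (1:ℝ)) - (((n:ℝ):ℝ) : AddCircle (1:ℝ)) := by
            rw [QuotientAddGroup.mk_sub]
        _ = _ := by rw [this, sub_zero]
    rw [hcoe]
    calc ‖((s:ℝ) : AddCircle (1:ℝ))‖ ≤ |s| := QuotientAddGroup.norm_mk_le_norm
      _ = s := abs_of_pos hs.1
      _ < ε := lt_of_lt_of_le hs.2 (min_le_left _ _)
  rw [show ((m.natAbs : ℝ)) = |(m : ℝ)| by rw [Nat.cast_natAbs (α := ℝ) m, Int.cast_abs]]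
  rcases abs_choice ((m : ℝ)) with h | h
  · rw [h]; exact key
  · rw [h, neg_mul, QuotientAddGroup.mk_neg, norm_neg]; exact key

/-- Finitely many natural multiples of an irrational are ε-dense on the circle. -/
lemma L2 (α : ℝ) (hα : Irrational α) {ε : ℝ} (hε : 0 < ε) :
    ∃ k : ℕ, ∀ x : AddCircle (1 : ℝ), ∃ j : ℕ, j ≤ k ∧
      dist x (((j : ℝ) * α : ℝ) : AddCircle (1 : ℝ)) < ε := by
  obtain ⟨m, hm, hnorm⟩ := L1 α hα hε
  set δ := ‖(((m : ℝ) * α : ℝ) : AddCircle (1 : ℝ))‖ with hδ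
  have hδ0 : 0 < δ := by
    rw [hδ, norm_pos_iff]
    intro h
    rw [AddCircle.coe_eq_zero_iff] at h
    obtain ⟨n, hn⟩ := h
    rw [zsmul_eq_mul, mul_one] at hn
    exact (hα.natCast_mul hm.ne').ne_int n hn.symm
  set b : ℝ := (m : ℝ) * α - round ((m : ℝ) * α) with hb
  have hbδ : |b| = δ := by
    rw [hδ, AddCircle.norm_eq]; simp [hb]
  have hb0 : b ≠ 0 := fun h => by rw [h, abs_zero] at hbδ; exact hδ0.ne hbδ
  have hbcoe : ((b : ℝ) : AddCircle (1:ℝ)) = (((m:ℝ) * α : ℝ) : AddCircle (1:ℝ)) := by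
    rw [hb]
    have : ((((round ((m:ℝ)*α)) : ℝ) : ℝ) : AddCircle (1:ℝ)) = 0 := by
      rw [AddCircle.coe_eq_zero_iff]; exact ⟨round ((m:ℝ)*α), by rw [zsmul_eq_mul, mul_one]⟩
    calc (((m:ℝ)*α - round ((m:ℝ)*α) : ℝ) : AddCircle (1:ℝ))
        = (((m:ℝ)*α : ℝ) : AddCircle (1:ℝ)) - ((((round ((m:ℝ)*α)):ℝ) : ℝ) : AddCircle (1:ℝ)) := by
          rw [QuotientAddGroup.mk_sub]
      _ = _ := by rw [this, sub_zero]
  refine ⟨m * ⌊1/δ⌋₊, fun x => ?_⟩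
  induction x using QuotientAddGroup.induction_on with
  | H r =>
  set y := Int.fract r with hy
  have hy0 : 0 ≤ y := Int.fract_nonneg r
  have hy1 : y < 1 := Int.fract_lt_one r
  have hycoe : ((y : ℝ) : AddCircle (1:ℝ)) = (r : AddCircle (1:ℝ)) := by
    rw [hy, Int.fract]
    have : (((((⌊r⌋:ℤ):ℝ)) : ℝ) : AddCircle (1:ℝ)) = 0 := by
      rw [AddCircle.coe_eq_zero_iff]; exact ⟨⌊r⌋, by rw [zsmul_eq_mul, mul_one]⟩
    calc ((r - (⌊r⌋:ℝ) : ℝ) : AddCircle (1:ℝ))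
        = ((r : ℝ) : AddCircle (1:ℝ)) - ((((⌊r⌋:ℤ):ℝ) : ℝ) : AddCircle (1:ℝ)) := by
          rw [QuotientAddGroup.mk_sub]
      _ = _ := by rw [this, sub_zero]
  set t : ℝ := if 0 < b then y else y - 1 with ht
  have htcoe : ((t : ℝ) : AddCircle (1:ℝ)) = (r : AddCircle (1:ℝ)) := by
    rw [ht]
    split
    · exact hycoe
    · have : (((1:ℝ) : ℝ) : AddCircle (1:ℝ)) = 0 := by
        rw [AddCircle.coe_eq_zero_iff]; exact ⟨1, by simp⟩
      calc ((y - 1 : ℝ) : AddCircle (1:ℝ))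
          = ((y : ℝ) : AddCircle (1:ℝ)) - (((1:ℝ) : ℝ) : AddCircle (1:ℝ)) := by rw [QuotientAddGroup.mk_sub]
        _ = _ := by rw [this, sub_zero, hycoe]
  have htb : 0 ≤ t / b := by
    rw [ht]; split
    · positivity
    · rename_i h
      have hbneg : b < 0 := lt_of_le_of_ne (not_lt.mp h) hb0
      rw [div_nonneg_iff]; right; exact ⟨by linarith, hbneg.le⟩
  have htabs : |t| ≤ 1 := by
    rw [ht]; split <;> [skip; skip] <;> rw [abs_le] <;> constructor <;> linarith
  set j₀ := ⌊t / b⌋₊ with hj₀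
  have hfl : (j₀ : ℝ) ≤ t / b := Nat.floor_le htb
  have hfl2 : t / b < j₀ + 1 := Nat.lt_floor_add_one _
  have hdist : |t - j₀ * b| < δ := by
    rcases lt_or_gt_of_ne hb0 with hbneg | hbpos
    · have h1 : t ≤ j₀ * b := by
        have := mul_le_mul_of_nonpos_right hfl hbneg.le
        rwa [div_mul_cancel₀ _ hb0] at this
      have h2 : (j₀ + 1 : ℝ) * b < t := by
        have := mul_lt_mul_of_neg_right hfl2 hbneg
        rwa [div_mul_cancel₀ _ hb0] at this
      rw [abs_sub_comm, abs_of_nonneg (by linarith)]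
      have : δ = -b := by rw [← hbδ, abs_of_neg hbneg]
      rw [this]; nlinarith
    · have h1 : (j₀ : ℝ) * b ≤ t := by
        have := mul_le_mul_of_nonneg_right hfl hbpos.le
        rwa [div_mul_cancel₀ _ hb0] at this
      have h2 : t < (j₀ + 1 : ℝ) * b := by
        have := mul_lt_mul_of_pos_right hfl2 hbpos
        rwa [div_mul_cancel₀ _ hb0] at this
      rw [abs_of_nonneg (by linarith)]
      have : δ = b := by rw [← hbδ, abs_of_pos hbpos]
      rw [this]; nlinarith
  have hj₀le : j₀ ≤ ⌊1/δ⌋₊ := by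
    apply Nat.floor_le_floor
    calc t / b = |t / b| := (abs_of_nonneg htb).symm
      _ = |t| / |b| := abs_div t b
      _ ≤ 1 / δ := by rw [hbδ]; gcongr
  refine ⟨m * j₀, Nat.mul_le_mul_left m hj₀le, ?_⟩
  have hcoe2 : (((m * j₀ : ℕ) : ℝ) * α : ℝ) = (j₀ : ℝ) * ((m:ℝ) * α) := by push_cast; ring
  have hcoe3 : ((((m * j₀ : ℕ) : ℝ) * α : ℝ) : AddCircle (1:ℝ))
      = (((j₀ : ℝ) * b : ℝ) : AddCircle (1:ℝ)) := by
    rw [hcoe2]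
    have h1 : (((j₀ : ℝ) * ((m:ℝ)*α) : ℝ) : AddCircle (1:ℝ))
        = (j₀ : ℕ) • ((((m:ℝ)*α : ℝ)) : AddCircle (1:ℝ)) := by
      rw [← AddCircle.coe_nsmul]; norm_num
    have h2 : (((j₀ : ℝ) * b : ℝ) : AddCircle (1:ℝ))
        = (j₀ : ℕ) • ((b : ℝ) : AddCircle (1:ℝ)) := by
      rw [← AddCircle.coe_nsmul]; norm_num
    rw [h1, h2, hbcoe]
  rw [hcoe3, ← htcoe, dist_eq_norm]
  calc ‖((t:ℝ) : AddCircle (1:ℝ)) - (((j₀:ℝ) * b : ℝ) : AddCircle (1:ℝ))‖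
      = ‖((t - (j₀:ℝ)*b : ℝ) : AddCircle (1:ℝ))‖ := by
        rw [QuotientAddGroup.mk_sub]
    _ ≤ |t - (j₀:ℝ)*b| := QuotientAddGroup.norm_mk_le_norm
    _ < δ := hdist
    _ ≤ ε := hnorm.le

theorem stmt7 (A : Set ℕ) (F : Finset ℕ)
    (hthick : ∀ k : ℕ, ∃ n : ℕ, ∀ i ≤ k, ∃ a ∈ A, ∃ f ∈ F, n + i = a + f)
    (α : ℝ) (hα : Irrational α) :
    (interior (closure
      ((fun n : ℕ => (((n : ℝ) * α : ℝ) : AddCircle (1 : ℝ))) '' A))).Nonempty := by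
  haveI : Fact ((0:ℝ) < 1) := ⟨one_pos⟩
  set C := closure ((fun n : ℕ => (((n : ℝ) * α : ℝ) : AddCircle (1 : ℝ))) '' A) with hC
  set T : ℕ → Set (AddCircle (1:ℝ)) :=
    fun f => (fun x => x + (((f : ℝ) * α : ℝ) : AddCircle (1:ℝ))) '' C with hT
  have hclosed : ∀ f : ℕ, IsClosed (T f) := fun f =>
    (Homeomorph.addRight (((f : ℝ) * α : ℝ) : AddCircle (1:ℝ))).isClosedMap C isClosed_closure
  have hdense : Dense (⋃ i : {f // f ∈ F}, T i.1) := by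
    rw [dense_iff_inter_open]
    rintro U hU ⟨u, hu⟩
    obtain ⟨ε, hε, hball⟩ := Metric.isOpen_iff.mp hU u hu
    obtain ⟨k, hk⟩ := L2 α hα hε
    obtain ⟨n, hn⟩ := hthick k
    obtain ⟨j, hj, hjd⟩ := hk (u - (((n : ℝ) * α : ℝ) : AddCircle (1:ℝ)))
    obtain ⟨a, ha, f, hf, hnj⟩ := hn j hj
    set p : AddCircle (1:ℝ) := (((a : ℝ) * α : ℝ) : AddCircle (1:ℝ)) + (((f : ℝ) * α : ℝ) : AddCircle (1:ℝ)) with hp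
    have hpU : p ∈ U := by
      apply hball
      have heq : p = (((n : ℝ) * α : ℝ) : AddCircle (1:ℝ)) + (((j : ℝ) * α : ℝ) : AddCircle (1:ℝ)) := by
        rw [hp]
        have e1 : (((a : ℝ) * α + (f:ℝ)*α : ℝ) : AddCircle (1:ℝ))
            = (((a : ℝ) * α : ℝ) : AddCircle (1:ℝ)) + (((f : ℝ) * α : ℝ) : AddCircle (1:ℝ)) := by
          rw [QuotientAddGroup.mk_add]
        have e2 : (((n : ℝ) * α + (j:ℝ)*α : ℝ) : AddCircle (1:ℝ))
            = (((n : ℝ) * α : ℝ) : AddCircle (1:ℝ)) + (((j : ℝ) * α : ℝ) : AddCircle (1:ℝ)) := by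
          rw [QuotientAddGroup.mk_add]
        rw [← e1, ← e2]
        congr 1
        have : ((n : ℝ) + j) * α = ((a : ℝ) + f) * α := by
          have : ((n + j : ℕ) : ℝ) = ((a + f : ℕ) : ℝ) := by exact_mod_cast hnj
          push_cast at this
          rw [this]
        ring_nf
        ring_nf at this
        linarith [this]
      rw [Metric.mem_ball, heq]
      calc dist ((((n : ℝ) * α : ℝ) : AddCircle (1:ℝ)) + (((j : ℝ) * α : ℝ) : AddCircle (1:ℝ))) u
          = dist ((((j : ℝ) * α : ℝ) : AddCircle (1:ℝ))) (u - (((n : ℝ) * α : ℝ) : AddCircle (1:ℝ))) := by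
            rw [dist_eq_norm, dist_eq_norm]; congr 1; abel
        _ < ε := by rw [dist_comm]; exact hjd
    have hpT : p ∈ T f := ⟨_, subset_closure ⟨a, ha, rfl⟩, rfl⟩
    exact ⟨p, hpU, Set.mem_iUnion.mpr ⟨⟨f, hf⟩, hpT⟩⟩
  have huniv : (⋃ i : {f // f ∈ F}, T i.1) = Set.univ := by
    have hcl : IsClosed (⋃ i : {f // f ∈ F}, T i.1) :=
      isClosed_iUnion_of_finite (fun i => hclosed i.1)
    rw [← hcl.closure_eq]
    exact hdense.closure_eq
  obtain ⟨i, x, hx⟩ := nonempty_interior_of_iUnion_of_closed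
    (fun i : {f // f ∈ F} => hclosed i.1) huniv
  set φ := Homeomorph.addRight (((i.1 : ℝ) * α : ℝ) : AddCircle (1:ℝ)) with hφ
  have : T i.1 = φ '' C := rfl
  rw [this, ← φ.image_interior] at hx
  obtain ⟨z, hz, -⟩ := hx
  exact ⟨z, hz⟩
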